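/- Let p ≥ 4 be even, p = 2k, and let W_p be the 2-plane in R^p spanned by v̂ = (1/√k)·Σ_{i=1}^{k} e_i and ŵ = (1/√k)·Σ_{i=k+1}^{2k} e_i. For a 2-element subset J = {i,j} with i < j ≤ k or k < i < j, the principal angles between W_p and R^J are π/2 and arccos√(4/p); for i ≤ k < j, both principal angles equal arccos√(2/p). -/

import Mathlib

open Matrix Real Polynomial

private lemma charpoly_fin_two' (a b c d : ℝ) :
    Matrix.charpoly (!![a,b;c,d]) = X^2 - C (a+d) * X + C (a*d-b*c) := by
  simp [Matrix.charpoly, Matrix.det_fin_two, charmatrix_apply_eq, charmatrix_apply_ne]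
  ring

private lemma poly_factor (a b : ℝ) :
    (X : ℝ[X])^2 - C (a+b) * X + C (a*b) = (X - C a) * (X - C b) := by
  rw [C_add, C_mul]; ring

/-- Let `p = 2k ≥ 4` and let `W_p ⊂ ℝ^p` be the 2-plane spanned by
`v̂ = (1/√k)·(e₁+…+e_k)` and `ŵ = (1/√k)·(e_{k+1}+…+e_{2k})`.  For a coordinate 2-plane
`ℝ^J`, `J = {i,j}` with `i < j`, the principal angles `φ₁, φ₂ ∈ [0,π/2]` between `W_p`
and `ℝ^J` (encoded via `cos²φ₁, cos²φ₂` being the eigenvalues of `(W̃ᵀE_J)(W̃ᵀE_J)ᵀ`) are: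
`π/2` and `arccos √(4/p)` if `i < j ≤ k` or `k < i < j` (Case I), and both equal to
`arccos √(2/p)` if `i ≤ k < j` (Case II). -/
theorem principal_angles_of_Wp (k : ℕ) (hk : 2 ≤ k)
    (vhat what : Fin (2 * k) → ℝ)
    (hv : vhat = fun a : Fin (2 * k) => if (a : ℕ) < k then 1 / Real.sqrt k else 0)
    (hw : what = fun a : Fin (2 * k) => if k ≤ (a : ℕ) then 1 / Real.sqrt k else 0)
    (W : Matrix (Fin (2 * k)) (Fin 2) ℝ)
    (hW : W = fun a t => if t = 0 then vhat a else what a)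
    (i j : Fin (2 * k)) (hij : i < j)
    (E : Matrix (Fin (2 * k)) (Fin 2) ℝ)
    (hE : E = fun a t => if t = 0 then (if a = i then 1 else 0)
      else (if a = j then 1 else 0)) :
    (((j : ℕ) < k ∨ k ≤ (i : ℕ)) →
      Matrix.charpoly ((Wᵀ * E) * (Wᵀ * E)ᵀ)
        = (X - C ((Real.cos (π / 2)) ^ 2)) *
            (X - C ((Real.cos (Real.arccos (Real.sqrt (4 / (2 * k : ℕ))))) ^ 2))) ∧
    (((i : ℕ) < k ∧ k ≤ (j : ℕ)) →
      Matrix.charpoly ((Wᵀ * E) * (Wᵀ * E)ᵀ)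
        = (X - C ((Real.cos (Real.arccos (Real.sqrt (2 / (2 * k : ℕ))))) ^ 2)) ^ 2) := by
  have hkpos : (0:ℝ) < (k:ℝ) := by exact_mod_cast (by omega : 0 < k)
  have hk4 : (4:ℝ) ≤ ((2*k : ℕ) : ℝ) := by exact_mod_cast (by omega : (4:ℕ) ≤ 2*k)
  have hsq : (1 / Real.sqrt k)^2 = 1 / (k:ℝ) := by
    rw [div_pow, one_pow, Real.sq_sqrt hkpos.le]
  have hij' : (i:ℕ) < (j:ℕ) := hij
  have hca : (Real.cos (π / 2)) ^ 2 = 0 := by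
    rw [Real.cos_pi_div_two]; ring
  have hcb : (Real.cos (Real.arccos (Real.sqrt (4 / (2 * k : ℕ))))) ^ 2 = 2 / (k:ℝ) := by
    have hx0 : (0:ℝ) ≤ 4 / ((2*k : ℕ) : ℝ) := by positivity
    have hx1 : (4:ℝ) / ((2*k : ℕ) : ℝ) ≤ 1 := by
      rw [div_le_one (by linarith)]; linarith
    rw [Real.cos_arccos (by linarith [Real.sqrt_nonneg (4 / ((2*k:ℕ):ℝ))])
        (Real.sqrt_le_one.mpr hx1), Real.sq_sqrt hx0]
    push_cast
    field_simp
    ring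
  have hcc : (Real.cos (Real.arccos (Real.sqrt (2 / (2 * k : ℕ))))) ^ 2 = 1 / (k:ℝ) := by
    have hx0 : (0:ℝ) ≤ 2 / ((2*k : ℕ) : ℝ) := by positivity
    have hx1 : (2:ℝ) / ((2*k : ℕ) : ℝ) ≤ 1 := by
      rw [div_le_one (by linarith)]; linarith
    rw [Real.cos_arccos (by linarith [Real.sqrt_nonneg (2 / ((2*k:ℕ):ℝ))])
        (Real.sqrt_le_one.mpr hx1), Real.sq_sqrt hx0]
    push_cast
    rw [div_eq_div_iff (by linarith) (by linarith)]
    ring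
  have hM : Wᵀ * E = !![vhat i, vhat j; what i, what j] := by
    ext a b
    rw [Matrix.mul_apply]; simp only [Matrix.transpose_apply]; rw [hW, hE]
    fin_cases a <;> fin_cases b <;>
      simp [Matrix.mul_apply, Finset.sum_ite_eq, Finset.sum_ite_eq', mul_ite]
  constructor
  · rintro (hjk | hki)
    · have hik : (i:ℕ) < k := lt_trans hij' hjk
      have hM1 : Wᵀ * E = !![1/Real.sqrt k, 1/Real.sqrt k; 0, 0] := by
        rw [hM, hv, hw]
        simp [hik, hjk, Nat.not_le.mpr hik, Nat.not_le.mpr hjk]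
      rw [hM1]
      rw [show (!![1/Real.sqrt k, 1/Real.sqrt k; 0, 0] : Matrix (Fin 2) (Fin 2) ℝ)ᵀ
            = !![1/Real.sqrt k, 0; 1/Real.sqrt k, 0] from by
          ext a b; fin_cases a <;> fin_cases b <;> rfl]
      rw [show (!![1/Real.sqrt k, 1/Real.sqrt k; 0, 0] : Matrix (Fin 2) (Fin 2) ℝ)
            * !![1/Real.sqrt k, 0; 1/Real.sqrt k, 0]
            = !![1/(k:ℝ) + 1/(k:ℝ), 0; 0, 0] from by
          rw [Matrix.mul_fin_two]; rw [show 1/Real.sqrt (k:ℝ) * (1/Real.sqrt k) = 1/(k:ℝ) from by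
            rw [← hsq]; ring]
          norm_num]
      rw [charpoly_fin_two', hca, hcb,
        show (1/(k:ℝ) + 1/(k:ℝ) + 0 : ℝ) = 0 + 2/(k:ℝ) from by ring,
        show ((1/(k:ℝ) + 1/(k:ℝ)) * 0 - 0 * 0 : ℝ) = 0 * (2/(k:ℝ)) from by ring,
        poly_factor]
    · have hjk : k ≤ (j:ℕ) := le_trans hki hij'.le
      have hM1 : Wᵀ * E = !![0, 0; 1/Real.sqrt k, 1/Real.sqrt k] := by
        rw [hM, hv, hw]
        simp [hki, hjk, Nat.not_lt.mpr hki, Nat.not_lt.mpr hjk]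
      rw [hM1]
      rw [show (!![0, 0; 1/Real.sqrt k, 1/Real.sqrt k] : Matrix (Fin 2) (Fin 2) ℝ)ᵀ
            = !![0, 1/Real.sqrt k; 0, 1/Real.sqrt k] from by
          ext a b; fin_cases a <;> fin_cases b <;> rfl]
      rw [show (!![0, 0; 1/Real.sqrt k, 1/Real.sqrt k] : Matrix (Fin 2) (Fin 2) ℝ)
            * !![0, 1/Real.sqrt k; 0, 1/Real.sqrt k]
            = !![0, 0; 0, 1/(k:ℝ) + 1/(k:ℝ)] from by
          rw [Matrix.mul_fin_two]; rw [show 1/Real.sqrt (k:ℝ) * (1/Real.sqrt k) = 1/(k:ℝ) from by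
            rw [← hsq]; ring]
          norm_num]
      rw [charpoly_fin_two', hca, hcb,
        show (0 + (1/(k:ℝ) + 1/(k:ℝ)) : ℝ) = 0 + 2/(k:ℝ) from by ring,
        show (0 * (1/(k:ℝ) + 1/(k:ℝ)) - 0 * 0 : ℝ) = 0 * (2/(k:ℝ)) from by ring,
        poly_factor]
  · rintro ⟨hik, hjk⟩
    have hM1 : Wᵀ * E = !![1/Real.sqrt k, 0; 0, 1/Real.sqrt k] := by
      rw [hM, hv, hw]
      simp [hik, hjk, Nat.not_le.mpr hik, Nat.not_lt.mpr hjk]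
    rw [hM1]
    rw [show (!![1/Real.sqrt k, 0; 0, 1/Real.sqrt k] : Matrix (Fin 2) (Fin 2) ℝ)ᵀ
          = !![1/Real.sqrt k, 0; 0, 1/Real.sqrt k] from by
        ext a b; fin_cases a <;> fin_cases b <;> rfl]
    rw [show (!![1/Real.sqrt k, 0; 0, 1/Real.sqrt k] : Matrix (Fin 2) (Fin 2) ℝ)
          * !![1/Real.sqrt k, 0; 0, 1/Real.sqrt k]
          = !![1/(k:ℝ), 0; 0, 1/(k:ℝ)] from by
        rw [Matrix.mul_fin_two]; rw [show 1/Real.sqrt (k:ℝ) * (1/Real.sqrt k) = 1/(k:ℝ) from by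
          rw [← hsq]; ring]
        norm_num]
    rw [charpoly_fin_two', hcc,
      show (1/(k:ℝ) + 1/(k:ℝ) : ℝ) = 1/(k:ℝ) + 1/(k:ℝ) from rfl,
      show (1/(k:ℝ) * (1/(k:ℝ)) - 0 * 0 : ℝ) = 1/(k:ℝ) * (1/(k:ℝ)) from by ring,
      poly_factor, sq]
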